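/- Let m ≥ 2 and let a be uniform on the units Z_m^×. For any fixed nonzero residue z ∈ Z_m, and any interval I ⊆ {0,...,m-1} of length at most ⌈m/n⌉+1, if gcd(z, m) ≤ ⌈m/n⌉ then Pr[a·z mod m ∈ I] ≤ O((log log m)/n). -/

import Mathlib

open Finset Nat Real

/-- primes ≤ n -/
noncomputable def pnl (n : ℕ) : Finset ℕ := (range (n+1)).filter Nat.Prime

lemma theta_le (n : ℕ) : ∑ p ∈ pnl n, Real.log p ≤ n * Real.log 4 := by
  have h1 : ((primorial n : ℕ) : ℝ) ≤ ((4 ^ n : ℕ) : ℝ) := by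
    exact_mod_cast primorial_le_4_pow n
  have h2 : Real.log (primorial n) ≤ Real.log ((4:ℕ) ^ n) := by
    apply Real.log_le_log (by exact_mod_cast Nat.pos_of_ne_zero (primorial_pos n).ne')
    exact_mod_cast h1
  have h3 : Real.log (primorial n) = ∑ p ∈ pnl n, Real.log p := by
    unfold primorial pnl
    push_cast
    rw [Real.log_prod]
    intro p hp
    simp only [Finset.mem_filter] at hp
    exact_mod_cast hp.2.pos.ne'
  rw [h3] at h2
  calc ∑ p ∈ pnl n, Real.log p ≤ Real.log ((4:ℕ)^n) := h2
    _ = n * Real.log 4 := by push_cast [Real.log_pow]; ring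

lemma floor_div_le_factorization {n p : ℕ} (hp : p.Prime) (hn : 0 < n) :
    n / p ≤ (n !).factorization p := by
  rw [← Nat.Prime.pow_dvd_iff_le_factorization hp (Nat.factorial_ne_zero n)]
  rw [Nat.Prime.pow_dvd_factorial_iff hp (Nat.lt_succ_of_lt (Nat.lt_succ_self _))]
  have h1 : (1:ℕ) ∈ Finset.Ico 1 (Nat.log p n + 2) := by
    simp [Nat.lt_succ_iff]
  calc n / p = n / p ^ 1 := by rw [pow_one]
    _ ≤ ∑ i ∈ Finset.Ico 1 (Nat.log p n + 2), n / p ^ i :=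
      Finset.single_le_sum (f := fun i => n / p ^ i) (fun i _ => Nat.zero_le _) h1

lemma log_factorial_eq (n : ℕ) :
    Real.log (n !) = ∑ p ∈ (n !).primeFactors, ((n !).factorization p : ℝ) * Real.log p := by
  conv_lhs => rw [← Nat.factorization_prod_pow_eq_self (Nat.factorial_ne_zero n)]
  rw [Finsupp.prod, Nat.support_factorization]
  push_cast
  rw [Real.log_prod]
  · exact Finset.sum_congr rfl fun p hp => by
      rw [Real.log_pow]
  · intro p hp
    have hp' := Nat.prime_of_mem_primeFactors hp
    have h0 : (0:ℝ) < p := by exact_mod_cast hp'.pos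
    positivity

lemma sum_floor_le_log_factorial {n : ℕ} (hn : 0 < n) :
    ∑ p ∈ pnl n, ((n / p : ℕ) : ℝ) * Real.log p ≤ Real.log (n !) := by
  rw [log_factorial_eq]
  calc ∑ p ∈ pnl n, ((n / p : ℕ) : ℝ) * Real.log p
      ≤ ∑ p ∈ pnl n, ((n !).factorization p : ℝ) * Real.log p := by
        apply Finset.sum_le_sum
        intro p hp
        simp only [pnl, Finset.mem_filter] at hp
        have hlog : 0 ≤ Real.log p := Real.log_nonneg (by exact_mod_cast hp.2.one_lt.le)
        have := floor_div_le_factorization hp.2 hn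
        gcongr ?_ * _
        exact_mod_cast this
    _ ≤ ∑ p ∈ (n !).primeFactors, ((n !).factorization p : ℝ) * Real.log p := by
        apply Finset.sum_le_sum_of_subset_of_nonneg
        · intro p hp
          simp only [pnl, Finset.mem_filter, Finset.mem_range, Nat.lt_succ_iff] at hp
          exact Nat.mem_primeFactors.mpr ⟨hp.2, (Nat.dvd_factorial hp.2.pos hp.1), Nat.factorial_ne_zero n⟩
        · intro p hp _
          have hp' := Nat.prime_of_mem_primeFactors hp
          have : (1:ℝ) ≤ p := by exact_mod_cast hp'.one_lt.le
          positivity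

lemma mertens1 {n : ℕ} (hn : 1 ≤ n) :
    ∑ p ∈ pnl n, Real.log p / p ≤ Real.log n + Real.log 4 := by
  have hn0 : (0:ℝ) < n := by exact_mod_cast hn
  rw [← mul_le_mul_iff_right₀ hn0]
  have key : (n:ℝ) * ∑ p ∈ pnl n, Real.log p / p
      ≤ ∑ p ∈ pnl n, ((n / p : ℕ) : ℝ) * Real.log p + ∑ p ∈ pnl n, Real.log p := by
    rw [Finset.mul_sum, ← Finset.sum_add_distrib]
    apply Finset.sum_le_sum
    intro p hp
    simp only [pnl, Finset.mem_filter] at hp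
    have hp2 := hp.2
    have hppos : (0:ℝ) < p := by exact_mod_cast hp2.pos
    have hlogp : 0 ≤ Real.log p := Real.log_nonneg (by exact_mod_cast hp2.one_lt.le)
    have hdiv : (n:ℝ) / p ≤ ((n / p : ℕ) : ℝ) + 1 := by
      have h3 : n < p * (n/p + 1) := Nat.lt_mul_div_succ n hp2.pos
      rw [div_le_iff₀ hppos]
      calc (n:ℝ) ≤ (p * (n/p + 1) : ℕ) := by exact_mod_cast h3.le
        _ = (((n/p:ℕ):ℝ) + 1) * p := by push_cast; ring
    calc (n:ℝ) * (Real.log p / p) = ((n:ℝ)/p) * Real.log p := by ring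
      _ ≤ (((n/p:ℕ):ℝ) + 1) * Real.log p := by
          apply mul_le_mul_of_nonneg_right hdiv hlogp
      _ = ((n/p:ℕ):ℝ) * Real.log p + Real.log p := by ring
  calc (n:ℝ) * ∑ p ∈ pnl n, Real.log p / p
      ≤ ∑ p ∈ pnl n, ((n / p : ℕ) : ℝ) * Real.log p + ∑ p ∈ pnl n, Real.log p := key
    _ ≤ Real.log (n !) + n * Real.log 4 := by
        gcongr
        · exact sum_floor_le_log_factorial hn
        · exact theta_le n
    _ ≤ n * Real.log n + n * Real.log 4 := by
        gcongr
        have : (n ! : ℝ) ≤ ((n ^ n : ℕ) : ℝ) := by exact_mod_cast Nat.factorial_le_pow n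
        calc Real.log (n !) ≤ Real.log ((n:ℝ) ^ n) := by
              apply Real.log_le_log (by exact_mod_cast Nat.factorial_pos n)
              exact_mod_cast this
          _ = n * Real.log n := Real.log_pow n n
    _ = n * (Real.log n + Real.log 4) := by ring

lemma pnl_succ (n : ℕ) : ∑ p ∈ pnl (n+1), (f : ℕ → ℝ) p
    = ∑ p ∈ pnl n, f p + (if (n+1).Prime then f (n+1) else 0) := by
  unfold pnl
  rw [Finset.sum_filter, Finset.sum_filter, Finset.sum_range_succ]

lemma abel {n : ℕ} (hn : 2 ≤ n) :
    ∑ p ∈ pnl n, 1/(p:ℝ) ≤ (∑ p ∈ pnl n, Real.log p/p)/Real.log n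
      + Real.log 4 * (1/Real.log 2 - 1/Real.log n)
      + (Real.log (Real.log n) - Real.log (Real.log 2)) := by
  induction n with
  | zero => omega
  | succ n ih =>
    rcases Nat.lt_or_ge n 2 with h2 | h2
    · -- n + 1 = 2
      interval_cases n
      · omega
      · have hp : pnl 2 = {2} := by decide
        rw [hp]
        have hl2 : Real.log 2 ≠ 0 := (Real.log_pos one_lt_two).ne'
        push_cast
        norm_num
        rw [div_div, mul_comm (2:ℝ) (Real.log 2), ← div_div, div_self hl2]
    · -- induction step
      have ih := ih h2
      have hn1 : (1:ℝ) < n := by exact_mod_cast h2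
      have hL : (0:ℝ) < Real.log n := Real.log_pos hn1
      have hL' : (0:ℝ) < Real.log (n+1) := Real.log_pos (by linarith)
      have hLle : Real.log n ≤ Real.log (n+1) := by
        apply Real.log_le_log (by linarith)
        linarith
      set L := Real.log n
      set L' := Real.log ((n:ℝ)+1)
      have hcast : Real.log ((n+1 : ℕ) : ℝ) = L' := by push_cast; rfl
      set A := ∑ p ∈ pnl n, Real.log p/(p:ℝ) with hA
      have hAle : A ≤ L + Real.log 4 := mertens1 (by omega)
      set a : ℝ := if (n+1).Prime then Real.log ((n+1:ℕ):ℝ)/((n+1:ℕ):ℝ) else 0 with ha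
      have key : (A - Real.log 4) * (1/L' - 1/L) + (Real.log L' - Real.log L) ≥ 0 := by
        have hconc : Real.log L' - Real.log L ≥ (L' - L)/L' := by
          have := Real.log_le_sub_one_of_pos (show (0:ℝ) < L/L' by positivity)
          rw [Real.log_div hL.ne' hL'.ne'] at this
          have h3 : L/L' - 1 = -((L'-L)/L') := by field_simp; ring
          linarith
        have hneg : 1/L' - 1/L ≤ 0 := by
          have : 1/L' ≤ 1/L := by apply one_div_le_one_div_of_le hL hLle
          linarith
        have hmul : (A - Real.log 4) * (1/L' - 1/L) ≥ L * (1/L' - 1/L) := by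
          apply mul_le_mul_of_nonpos_right (by linarith) hneg
        have hLcalc : L * (1/L' - 1/L) = -((L' - L)/L') := by field_simp; ring
        rw [hLcalc] at hmul
        linarith
      have hnz : ((n+1:ℕ):ℝ) ≠ 0 := by positivity
      have hsplit : (if (n+1).Prime then 1/(((n+1:ℕ)):ℝ) else 0) = a / L' := by
        rw [ha]
        split
        · rw [hcast]
          field_simp
        · simp
      have hLHS : ∑ p ∈ pnl (n+1), 1/(p:ℝ) = ∑ p ∈ pnl n, 1/(p:ℝ) + a/L' := by
        rw [pnl_succ, hsplit]
      have hRHSsum : ∑ p ∈ pnl (n+1), Real.log p/(p:ℝ) = A + a := by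
        rw [pnl_succ, ha]
      rw [hLHS, hRHSsum, hcast]
      have hanneg : 0 ≤ a := by
        rw [ha]; split
        · have : (1:ℝ) ≤ ((n+1:ℕ):ℝ) := by exact_mod_cast Nat.le_add_left 1 n
          have := Real.log_nonneg this
          positivity
        · exact le_refl 0
      calc ∑ p ∈ pnl n, 1/(p:ℝ) + a / L'
          ≤ (A/L + Real.log 4 * (1/Real.log 2 - 1/L) + (Real.log L - Real.log (Real.log 2))) + a/L' := by
            apply add_le_add_left
            exact ih
        _ ≤ ((A + a)/L' + Real.log 4 * (1/Real.log 2 - 1/L') + (Real.log L' - Real.log (Real.log 2))) := by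
            have expand : (A + a)/L' - A/L = a/L' + (A - Real.log 4) * (1/L' - 1/L)
                + Real.log 4 * (1/L' - 1/L) := by
              field_simp
              ring
            nlinarith [key]

lemma tele {n : ℕ} (hn : 1 ≤ n) :
    ∑ k ∈ Finset.Ico 2 (n+1), (1:ℝ)/(k*(k-1)) ≤ 1 - 1/n := by
  induction n with
  | zero => omega
  | succ n ih =>
    rcases Nat.lt_or_ge n 1 with h1 | h1
    · interval_cases n
      · simp
    · have ih := ih h1
      rw [Finset.sum_Ico_succ_top (by omega)]
      have hn0 : (0:ℝ) < n := by exact_mod_cast h1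
      have hstep : (1:ℝ)/((n+1:ℕ)*((n+1:ℕ)-1)) = 1/n - 1/(n+1) := by
        push_cast
        rw [div_sub_div _ _ hn0.ne' (by positivity)]
        ring_nf
      push_cast
      push_cast at hstep ih
      rw [hstep]
      linarith

noncomputable def mertensC : ℝ := 2 + 2*(Real.log 4/Real.log 2) - Real.log (Real.log 2)

lemma mertens2 {n : ℕ} (hn : 2 ≤ n) :
    ∑ p ∈ pnl n, 1/((p:ℝ)-1) ≤ Real.log (Real.log n) + mertensC := by
  have hsplit : ∀ p ∈ pnl n, 1/((p:ℝ)-1) = 1/p + 1/(p*(p-1)) := by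
    intro p hp
    simp only [pnl, Finset.mem_filter] at hp
    have h2 : (2:ℝ) ≤ p := by exact_mod_cast hp.2.two_le
    have h0 : (0:ℝ) < p := by linarith
    have h1 : (0:ℝ) < (p:ℝ) - 1 := by linarith
    field_simp; ring
  rw [Finset.sum_congr rfl hsplit, Finset.sum_add_distrib]
  have hB : ∑ p ∈ pnl n, 1/((p:ℝ)*(p-1)) ≤ 1 := by
    calc ∑ p ∈ pnl n, 1/((p:ℝ)*(p-1)) ≤ ∑ k ∈ Finset.Ico 2 (n+1), (1:ℝ)/(k*(k-1)) := by
          apply Finset.sum_le_sum_of_subset_of_nonneg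
          · intro p hp
            simp only [pnl, Finset.mem_filter, Finset.mem_range] at hp
            simp only [Finset.mem_Ico]
            exact ⟨hp.2.two_le, hp.1⟩
          · intro k hk _
            simp only [Finset.mem_Ico] at hk
            have : (2:ℝ) ≤ k := by exact_mod_cast hk.1
            have h1 : (0:ℝ) < (k:ℝ) - 1 := by linarith
            positivity
      _ ≤ 1 - 1/n := tele (by omega)
      _ ≤ 1 := by
          have : (0:ℝ) < n := by exact_mod_cast (by omega : 0 < n)
          have : (0:ℝ) ≤ 1/(n:ℝ) := by positivity
          linarith
  have habel := abel hn
  have hn1 : (1:ℝ) < n := by exact_mod_cast hn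
  have hL : (0:ℝ) < Real.log n := Real.log_pos hn1
  have hl2 : (0:ℝ) < Real.log 2 := Real.log_pos one_lt_two
  have hl4 : (0:ℝ) ≤ Real.log 4 := Real.log_nonneg (by norm_num)
  have hL2 : Real.log 2 ≤ Real.log n := Real.log_le_log (by norm_num) (by exact_mod_cast hn)
  have hA : ∑ p ∈ pnl n, Real.log p/(p:ℝ) ≤ Real.log n + Real.log 4 := mertens1 (by omega)
  have h1 : (∑ p ∈ pnl n, Real.log p/(p:ℝ))/Real.log n ≤ 1 + Real.log 4/Real.log 2 := by
    rw [div_le_iff₀ hL]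
    have : Real.log 4 / Real.log 2 * Real.log n ≥ Real.log 4 := by
      rw [ge_iff_le, div_mul_eq_mul_div, le_div_iff₀ hl2]
      exact mul_le_mul_of_nonneg_left hL2 hl4
    linarith
  have h2 : Real.log 4 * (1/Real.log 2 - 1/Real.log n) ≤ Real.log 4/Real.log 2 := by
    have : 0 < 1/Real.log n := by positivity
    have hle : 1/Real.log 2 - 1/Real.log n ≤ 1/Real.log 2 := by linarith
    calc Real.log 4 * (1/Real.log 2 - 1/Real.log n) ≤ Real.log 4 * (1/Real.log 2) :=
          mul_le_mul_of_nonneg_left hle hl4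
      _ = Real.log 4/Real.log 2 := by ring
  unfold mertensC
  linarith

lemma card_primeFactors_le_log {m : ℕ} (hm : 1 ≤ m) : m.primeFactors.card ≤ Nat.log 2 m := by
  rw [Nat.le_log_iff_pow_le one_lt_two (by omega)]
  calc 2 ^ m.primeFactors.card ≤ ∏ p ∈ m.primeFactors, p := by
        apply Finset.pow_card_le_prod
        intro p hp
        exact (Nat.prime_of_mem_primeFactors hp).two_le
    _ ≤ m := Nat.le_of_dvd (by omega) (Nat.prod_primeFactors_dvd m)

lemma sum_primeFactors_le {m : ℕ} (hm : 3 ≤ m) :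
    ∑ p ∈ m.primeFactors, 1/((p:ℝ)-1)
      ≤ Real.log (Real.log ((max 2 (Nat.log 2 m) : ℕ) : ℝ)) + mertensC + 1 := by
  set T := max 2 (Nat.log 2 m) with hT
  have hT2 : 2 ≤ T := le_max_left _ _
  have hTpos : (0:ℝ) < T := by positivity
  have hnonneg : ∀ p ∈ m.primeFactors, (0:ℝ) ≤ 1/((p:ℝ)-1) := by
    intro p hp
    have h2 : (2:ℝ) ≤ p := by exact_mod_cast (Nat.prime_of_mem_primeFactors hp).two_le
    have : (0:ℝ) < (p:ℝ)-1 := by linarith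
    positivity
  rw [← Finset.sum_filter_add_sum_filter_not m.primeFactors (· ≤ T)]
  have hsmall : ∑ p ∈ m.primeFactors.filter (· ≤ T), 1/((p:ℝ)-1)
      ≤ Real.log (Real.log T) + mertensC := by
    calc ∑ p ∈ m.primeFactors.filter (· ≤ T), 1/((p:ℝ)-1)
        ≤ ∑ p ∈ pnl T, 1/((p:ℝ)-1) := by
          apply Finset.sum_le_sum_of_subset_of_nonneg
          · intro p hp
            simp only [Finset.mem_filter] at hp
            simp only [pnl, Finset.mem_filter, Finset.mem_range]
            exact ⟨by omega, Nat.prime_of_mem_primeFactors hp.1⟩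
          · intro p hp _
            simp only [pnl, Finset.mem_filter] at hp
            have h2 : (2:ℝ) ≤ p := by exact_mod_cast hp.2.two_le
            have : (0:ℝ) < (p:ℝ)-1 := by linarith
            positivity
      _ ≤ Real.log (Real.log T) + mertensC := mertens2 hT2
  have hbig : ∑ p ∈ m.primeFactors.filter (fun p => ¬ (p ≤ T)), 1/((p:ℝ)-1) ≤ 1 := by
    have hcard : (m.primeFactors.filter (fun p => ¬ (p ≤ T))).card ≤ T := by
      calc (m.primeFactors.filter (fun p => ¬ (p ≤ T))).card ≤ m.primeFactors.card :=
            Finset.card_filter_le _ _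
        _ ≤ Nat.log 2 m := card_primeFactors_le_log (by omega)
        _ ≤ T := le_max_right _ _
    calc ∑ p ∈ m.primeFactors.filter (fun p => ¬ (p ≤ T)), 1/((p:ℝ)-1)
        ≤ ∑ _p ∈ m.primeFactors.filter (fun p => ¬ (p ≤ T)), 1/(T:ℝ) := by
          apply Finset.sum_le_sum
          intro p hp
          simp only [Finset.mem_filter, not_le] at hp
          have hpT : (T:ℝ) + 1 ≤ p := by exact_mod_cast hp.2
          have : (0:ℝ) < (p:ℝ) - 1 := by linarith
          apply one_div_le_one_div_of_le hTpos
          linarith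
      _ = (m.primeFactors.filter (fun p => ¬ (p ≤ T))).card * (1/(T:ℝ)) := by
          rw [Finset.sum_const, nsmul_eq_mul]
      _ ≤ T * (1/(T:ℝ)) := by
          apply mul_le_mul_of_nonneg_right _ (by positivity)
          exact_mod_cast hcard
      _ = 1 := by field_simp
  linarith

noncomputable def totC : ℝ := Real.exp (mertensC + 1) * (1 + Real.log 2/Real.log (Real.log 3))

lemma log3_pos : (0:ℝ) < Real.log (Real.log 3) := by
  have he : Real.exp 1 < 3 := by
    have := Real.exp_one_lt_d9
    linarith
  have h3 : (1:ℝ) < Real.log 3 := by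
    rw [← Real.log_exp 1]
    apply Real.log_lt_log (Real.exp_pos 1) he
  exact Real.log_pos h3

lemma totient_lower {m : ℕ} (hm : 3 ≤ m) :
    (m:ℝ) ≤ totC * Real.log (Real.log m) * (Nat.totient m) := by
  have hm0 : 0 < m := by omega
  have hφ : 0 < Nat.totient m := Nat.totient_pos.mpr hm0
  -- product formula
  have hprod0 := Nat.totient_mul_prod_primeFactors m
  have h1 : ∏ p ∈ m.primeFactors, ((p:ℝ)-1) = ∏ p ∈ m.primeFactors, (((p-1 : ℕ)) : ℝ) := by
    apply Finset.prod_congr rfl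
    intro p hp
    have hp1 : 1 ≤ p := (Nat.prime_of_mem_primeFactors hp).pos
    rw [Nat.cast_sub hp1, Nat.cast_one]
  have hcast : ((Nat.totient m : ℝ)) * ∏ p ∈ m.primeFactors, (p:ℝ)
      = (m:ℝ) * ∏ p ∈ m.primeFactors, ((p:ℝ) - 1) := by
    rw [h1, ← Nat.cast_prod, ← Nat.cast_prod, ← Nat.cast_mul, ← Nat.cast_mul]
    exact_mod_cast hprod0
  set E : ℝ := Real.exp (∑ p ∈ m.primeFactors, 1/((p:ℝ)-1)) with hE
  have hprodpos : (0:ℝ) < ∏ p ∈ m.primeFactors, ((p:ℝ) - 1) := by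
    apply Finset.prod_pos
    intro p hp
    have h2 : (2:ℝ) ≤ p := by exact_mod_cast (Nat.prime_of_mem_primeFactors hp).two_le
    linarith
  have hstep1 : ∏ p ∈ m.primeFactors, (p:ℝ)
      ≤ (∏ p ∈ m.primeFactors, ((p:ℝ) - 1)) * E := by
    rw [hE, Real.exp_sum, ← Finset.prod_mul_distrib]
    apply Finset.prod_le_prod
    · intro p hp
      have : (0:ℝ) ≤ p := Nat.cast_nonneg p
      exact this
    · intro p hp
      have h2 : (2:ℝ) ≤ p := by exact_mod_cast (Nat.prime_of_mem_primeFactors hp).two_le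
      have h1' : (0:ℝ) < (p:ℝ) - 1 := by linarith
      have hexp : 1/((p:ℝ)-1) + 1 ≤ Real.exp (1/((p:ℝ)-1)) := Real.add_one_le_exp _
      calc (p:ℝ) = ((p:ℝ)-1) * (1/((p:ℝ)-1) + 1) := by field_simp; ring
        _ ≤ ((p:ℝ)-1) * Real.exp (1/((p:ℝ)-1)) := by
            apply mul_le_mul_of_nonneg_left hexp h1'.le
  have hmφE : (m:ℝ) ≤ (Nat.totient m : ℝ) * E := by
    have h2 : (m:ℝ) * ∏ p ∈ m.primeFactors, ((p:ℝ) - 1)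
        ≤ ((Nat.totient m : ℝ) * E) * ∏ p ∈ m.primeFactors, ((p:ℝ) - 1) := by
      rw [← hcast]
      calc (Nat.totient m : ℝ) * ∏ p ∈ m.primeFactors, (p:ℝ)
          ≤ (Nat.totient m : ℝ) * ((∏ p ∈ m.primeFactors, ((p:ℝ) - 1)) * E) := by
            apply mul_le_mul_of_nonneg_left hstep1 (Nat.cast_nonneg _)
        _ = ((Nat.totient m : ℝ) * E) * ∏ p ∈ m.primeFactors, ((p:ℝ) - 1) := by ring
    exact le_of_mul_le_mul_right h2 hprodpos
  -- bound E
  set T : ℕ := max 2 (Nat.log 2 m) with hT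
  have hT2 : 2 ≤ T := le_max_left _ _
  have hlogT : (0:ℝ) < Real.log T := Real.log_pos (by exact_mod_cast hT2)
  have hEbound : E ≤ Real.exp (mertensC + 1) * Real.log T := by
    rw [hE]
    calc Real.exp (∑ p ∈ m.primeFactors, 1/((p:ℝ)-1))
        ≤ Real.exp (Real.log (Real.log T) + mertensC + 1) :=
          Real.exp_le_exp.mpr (sum_primeFactors_le hm)
      _ = Real.exp (mertensC + 1) * Real.exp (Real.log (Real.log T)) := by
          rw [← Real.exp_add]; ring_nf
      _ = Real.exp (mertensC + 1) * Real.log T := by rw [Real.exp_log hlogT]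
  -- bound log T by loglog m
  have hlog2pos : (0:ℝ) < Real.log 2 := Real.log_pos one_lt_two
  have hlogm1 : (1:ℝ) < Real.log m := by
    have he : Real.exp 1 < 3 := by have := Real.exp_one_lt_d9; linarith
    calc (1:ℝ) = Real.log (Real.exp 1) := (Real.log_exp 1).symm
      _ < Real.log 3 := Real.log_lt_log (Real.exp_pos 1) he
      _ ≤ Real.log m := Real.log_le_log (by norm_num) (by exact_mod_cast hm)
  have hllm : Real.log (Real.log 3) ≤ Real.log (Real.log m) := by
    apply Real.log_le_log
    · have he : Real.exp 1 < 3 := by have := Real.exp_one_lt_d9; linarith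
      calc (0:ℝ) < 1 := one_pos
        _ = Real.log (Real.exp 1) := (Real.log_exp 1).symm
        _ < Real.log 3 := Real.log_lt_log (Real.exp_pos 1) he
    · exact Real.log_le_log (by norm_num) (by exact_mod_cast hm)
  have hllmpos : (0:ℝ) < Real.log (Real.log m) := lt_of_lt_of_le log3_pos hllm
  have hTle : (T:ℝ) ≤ 2 * Real.log m := by
    have hL : (Nat.log 2 m : ℝ) ≤ 2 * Real.log m := by
      have hpow : (2:ℕ) ^ (Nat.log 2 m) ≤ m := Nat.pow_log_le_self 2 (by omega)
      have : (Nat.log 2 m : ℝ) * Real.log 2 ≤ Real.log m := by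
        rw [← Real.log_pow]
        apply Real.log_le_log (by positivity)
        exact_mod_cast hpow
      have hhalf : (1:ℝ)/2 ≤ Real.log 2 := by
        have := Real.log_two_gt_d9; linarith
      nlinarith [show (0:ℝ) ≤ (Nat.log 2 m : ℝ) from Nat.cast_nonneg _]
    have h2 : (2:ℝ) ≤ 2 * Real.log m := by linarith
    rw [hT]
    push_cast
    exact max_le h2 hL
  have hlogTle : Real.log T ≤ (1 + Real.log 2/Real.log (Real.log 3)) * Real.log (Real.log m) := by
    have h1' : Real.log T ≤ Real.log (2 * Real.log m) :=
      Real.log_le_log (by positivity) hTle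
    rw [Real.log_mul (by norm_num) (by linarith)] at h1'
    have h2' : Real.log 2 ≤ (Real.log 2/Real.log (Real.log 3)) * Real.log (Real.log m) := by
      rw [div_mul_eq_mul_div, le_div_iff₀ log3_pos]
      apply mul_le_mul_of_nonneg_left hllm hlog2pos.le
    calc Real.log T ≤ Real.log 2 + Real.log (Real.log m) := h1'
      _ ≤ (Real.log 2/Real.log (Real.log 3)) * Real.log (Real.log m) + Real.log (Real.log m) := by
          linarith
      _ = (1 + Real.log 2/Real.log (Real.log 3)) * Real.log (Real.log m) := by ring
  -- combine
  have hφnn : (0:ℝ) ≤ (Nat.totient m : ℝ) := Nat.cast_nonneg _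
  calc (m:ℝ) ≤ (Nat.totient m : ℝ) * E := hmφE
    _ ≤ (Nat.totient m : ℝ) * (Real.exp (mertensC + 1) * Real.log T) :=
        mul_le_mul_of_nonneg_left hEbound hφnn
    _ ≤ (Nat.totient m : ℝ) * (Real.exp (mertensC + 1)
          * ((1 + Real.log 2/Real.log (Real.log 3)) * Real.log (Real.log m))) := by
        apply mul_le_mul_of_nonneg_left _ hφnn
        apply mul_le_mul_of_nonneg_left hlogTle (Real.exp_pos _).le
    _ = totC * Real.log (Real.log m) * (Nat.totient m) := by
        unfold totC
        ring

lemma count_bound {m z s len : ℕ} (hm : 0 < m) (hz : 0 < z) (hzm : z < m) :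
    (((Finset.range m).filter (fun a => Nat.Coprime a m)).filter
        (fun a => a * z % m ∈ Finset.Ico s (s + len))).card ≤ len + 2 * Nat.gcd z m := by
  set k := Nat.gcd z m with hk
  have hk0 : 0 < k := Nat.gcd_pos_of_pos_left m hz
  have hkm : k ∣ m := Nat.gcd_dvd_right z m
  have hkz : k ∣ z := Nat.gcd_dvd_left z m
  set d := m / k with hd
  have hdk : d * k = m := Nat.div_mul_cancel hkm
  have hd0 : 0 < d := by
    rcases Nat.eq_zero_or_pos d with h | h
    · rw [h] at hdk; simp at hdk; omega
    · exact h
  set F := ((Finset.range m).filter (fun a => Nat.Coprime a m)).filter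
      (fun a => a * z % m ∈ Finset.Ico s (s + len)) with hF
  -- key congruence
  have hcong : ∀ a : ℕ, (a % d) * z % m = a * z % m := by
    intro a
    have hmdz : m ∣ d * z := by
      obtain ⟨z', hz'⟩ := hkz
      refine ⟨z', ?_⟩
      rw [hz', ← hdk]
      ring
    have h1 : a % d ≡ a [MOD d] := Nat.mod_modEq a d
    have h2 : (a % d) * z ≡ a * z [MOD d * z] := h1.mul_right' z
    exact (h2.of_dvd hmdz)
  -- Step B : card F ≤ k * card (image)
  have hB : F.card ≤ k * (F.image (· % d)).card := by
    apply Finset.card_le_mul_card_image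
    intro b _
    calc (F.filter (fun a => a % d = b)).card
        ≤ ((Finset.range m).filter (fun a => a % d = b)).card := by
          apply Finset.card_le_card
          intro a ha
          simp only [hF, Finset.mem_filter, Finset.mem_range] at ha ⊢
          exact ⟨ha.1.1.1, ha.2⟩
      _ ≤ (Finset.range k).card := by
          apply Finset.card_le_card_of_injOn (fun a => a / d)
          · intro a ha
            simp only [Finset.mem_coe, Finset.mem_filter, Finset.mem_range] at ha ⊢
            rw [Nat.div_lt_iff_lt_mul hd0]
            calc a < m := ha.1
              _ = k * d := by rw [← hdk]; ring
          · intro a₁ h₁ a₂ h₂ hdiv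
            simp only [Finset.mem_filter, Finset.mem_range, Finset.coe_filter,
              Set.mem_setOf_eq] at h₁ h₂
            have e₁ := Nat.div_add_mod a₁ d
            have e₂ := Nat.div_add_mod a₂ d
            simp only at hdiv
            have hdd : d * (a₁ / d) = d * (a₂ / d) := by rw [hdiv]
            omega
      _ = k := Finset.card_range k
  -- Step C : image ⊆ G
  set G := (Finset.range d).filter (fun b => b * z % m ∈ Finset.Ico s (s + len)) with hG
  have hC : F.image (· % d) ⊆ G := by
    intro b hb
    simp only [Finset.mem_image] at hb
    obtain ⟨a, ha, rfl⟩ := hb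
    simp only [hF, Finset.mem_filter, Finset.mem_range] at ha
    simp only [hG, Finset.mem_filter, Finset.mem_range]
    refine ⟨Nat.mod_lt a hd0, ?_⟩
    rw [hcong a]
    exact ha.2
  -- Step D : card G ≤ card H
  set H := (Finset.range d).filter (fun c => k * c ∈ Finset.Ico s (s + len)) with hH
  have hcop : Nat.Coprime (z / k) d := Nat.coprime_div_gcd_div_gcd hk0
  have hmodinj : ∀ b₁ < d, ∀ b₂ < d, b₁ * z % m = b₂ * z % m → b₁ = b₂ := by
    intro b₁ hb₁ b₂ hb₂ heq
    -- wlog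
    have key : ∀ x y : ℕ, x < d → y < d → y ≤ x → x * z % m = y * z % m → x = y := by
      intro x y hx hy hyx he
      have hme : y * z ≡ x * z [MOD m] := Nat.ModEq.symm he
      have hdvd : m ∣ x * z - y * z := (Nat.modEq_iff_dvd' (Nat.mul_le_mul_right z hyx)).mp hme
      obtain ⟨z', hz'⟩ := hkz
      have hfact : x * z - y * z = ((x - y) * z') * k := by
        rw [← Nat.sub_mul, hz']; ring
      have hdvd2 : d * k ∣ ((x - y) * z') * k := by rw [hdk, ← hfact]; exact hdvd
      have hdvd3 : d ∣ (x - y) * z' := by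
        have := (Nat.mul_dvd_mul_iff_right hk0).mp hdvd2
        exact this
      have hz'constraint : Nat.Coprime z' d := by
        have : z' = z / k := by rw [hz']; rw [Nat.mul_div_cancel_left z' hk0]
        rw [this]; exact hcop
      have hdvd4 : d ∣ (x - y) := (hz'constraint.symm).dvd_of_dvd_mul_right hdvd3
      have : x - y < d := by omega
      have := Nat.eq_zero_of_dvd_of_lt hdvd4
      omega
    rcases le_total b₂ b₁ with h | h
    · exact key b₁ b₂ hb₁ hb₂ h heq
    · exact (key b₂ b₁ hb₂ hb₁ h heq.symm).symm
  have hD : G.card ≤ H.card := by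
    apply Finset.card_le_card_of_injOn (fun b => (b * z % m) / k)
    · intro b hb
      simp only [hG, Finset.mem_coe, Finset.mem_filter, Finset.mem_range] at hb
      have hkdvd : k ∣ b * z % m := by
        rw [Nat.dvd_mod_iff hkm]
        exact Dvd.dvd.mul_left hkz b
      have hcancel : k * ((b * z % m) / k) = b * z % m := Nat.mul_div_cancel' hkdvd
      simp only [hH, Finset.mem_coe, Finset.mem_filter, Finset.mem_range]
      constructor
      · rw [Nat.div_lt_iff_lt_mul hk0]
        calc b * z % m < m := Nat.mod_lt _ hm
          _ = d * k := hdk.symm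
      · rw [hcancel]; exact hb.2
    · intro b₁ h₁ b₂ h₂ heq
      simp only [hG, Finset.coe_filter, Finset.mem_range, Set.mem_setOf_eq] at h₁ h₂
      simp only at heq
      have hkdvd1 : k ∣ b₁ * z % m := by
        rw [Nat.dvd_mod_iff hkm]; exact Dvd.dvd.mul_left hkz b₁
      have hkdvd2 : k ∣ b₂ * z % m := by
        rw [Nat.dvd_mod_iff hkm]; exact Dvd.dvd.mul_left hkz b₂
      have : b₁ * z % m = b₂ * z % m := by
        have c1 := Nat.mul_div_cancel' hkdvd1
        have c2 := Nat.mul_div_cancel' hkdvd2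
        rw [← c1, ← c2, heq]
      exact hmodinj b₁ h₁.1 b₂ h₂.1 this
  -- Step E : card H ≤ len / k + 2
  have hE : H.card ≤ len / k + 2 := by
    calc H.card ≤ (Finset.Ico (s / k) (s / k + (len / k + 2))).card := by
          apply Finset.card_le_card
          intro c hc
          simp only [hH, Finset.mem_filter, Finset.mem_range, Finset.mem_Ico] at hc ⊢
          obtain ⟨hcd, hlo, hhi⟩ := hc
          constructor
          · have h1 : s / k ≤ (k * c) / k := Nat.div_le_div_right hlo
            rwa [Nat.mul_div_cancel_left c hk0] at h1
          · have hsk := Nat.div_add_mod s k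
            have hlk := Nat.div_add_mod len k
            have hmod1 : s % k < k := Nat.mod_lt _ hk0
            have hmod2 : len % k < k := Nat.mod_lt _ hk0
            have hmul : k * c < k * (s / k + (len / k + 2)) := by
              rw [Nat.mul_add, Nat.mul_add]
              omega
            exact Nat.lt_of_mul_lt_mul_left hmul
      _ = len / k + 2 := by rw [Nat.card_Ico, Nat.add_sub_cancel_left]
  -- combine
  calc F.card ≤ k * (F.image (· % d)).card := hB
    _ ≤ k * G.card := by
        apply Nat.mul_le_mul_left
        exact Finset.card_le_card hC
    _ ≤ k * H.card := Nat.mul_le_mul_left _ hD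
    _ ≤ k * (len / k + 2) := Nat.mul_le_mul_left _ hE
    _ = (len / k) * k + 2 * k := by ring
    _ ≤ len + 2 * k := by
        have := Nat.div_mul_le_self len k
        omega

lemma totC_pos : (0:ℝ) < totC := by
  unfold totC
  have h1 : (0:ℝ) < Real.log 2 := Real.log_pos one_lt_two
  have h2 := log3_pos
  positivity

/-- For `a` uniform on the units of `Z_m`, a fixed nonzero residue `z` with
`gcd(z,m) ≤ ⌈m/n⌉`, and an interval `I ⊆ {0,...,m-1}` of length at most
`⌈m/n⌉ + 1`, the probability that `a·z mod m` lands in `I` is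
`O((log log m)/n)`. -/
theorem stmt_5 : ∃ C > (0 : ℝ), ∀ m n : ℕ, 3 ≤ m → 0 < n → n ≤ m →
    ∀ z : ℕ, 0 < z → z < m → (Nat.gcd z m : ℚ) ≤ ⌈(m : ℚ) / n⌉ →
    ∀ s len : ℕ, s + len ≤ m → (len : ℚ) ≤ ⌈(m : ℚ) / n⌉ + 1 →
    ((((Finset.range m).filter (fun a => Nat.Coprime a m)).filter
        (fun a => a * z % m ∈ Finset.Ico s (s + len))).card : ℝ) / (Nat.totient m)
      ≤ C * Real.log (Real.log m) / n := by
  refine ⟨8 * totC, by have := totC_pos; linarith, ?_⟩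
  intro m n hm hn hnm z hz hzm hgcd s len hslen hlen
  set k := Nat.gcd z m with hk
  set N := (((Finset.range m).filter (fun a => Nat.Coprime a m)).filter
      (fun a => a * z % m ∈ Finset.Ico s (s + len))).card with hN
  have hcount : N ≤ len + 2 * k := count_bound (by omega) hz hzm
  -- rational arithmetic: len + 2k ≤ 7 m / n
  have hnq : (0:ℚ) < n := by exact_mod_cast hn
  have hmn1 : (1:ℚ) ≤ (m:ℚ)/n := by
    rw [le_div_iff₀ hnq]
    simpa using (by exact_mod_cast hnm : (n:ℚ) ≤ m)
  have hceil : ((⌈(m : ℚ) / n⌉ : ℤ) : ℚ) ≤ (m:ℚ)/n + 1 := by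
    have := Int.ceil_lt_add_one ((m:ℚ)/n)
    linarith
  have hq : (len:ℚ) + 2 * k ≤ 7 * ((m:ℚ)/n) := by
    have h1 : (len:ℚ) ≤ (m:ℚ)/n + 2 := by
      calc (len:ℚ) ≤ ((⌈(m : ℚ) / n⌉ : ℤ) : ℚ) + 1 := hlen
        _ ≤ (m:ℚ)/n + 2 := by linarith
    have h2 : (k:ℚ) ≤ (m:ℚ)/n + 1 := le_trans hgcd hceil
    linarith
  have hreal : ((len:ℝ) + 2 * k) ≤ 7 * ((m:ℝ)/n) := by
    have := (Rat.cast_le (K := ℝ)).mpr hq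
    push_cast at this
    convert this using 2 <;> push_cast <;> ring
  -- put together
  have hφ : (0:ℝ) < (Nat.totient m : ℝ) := by
    exact_mod_cast Nat.totient_pos.mpr (show 0 < m by omega)
  have hnr : (0:ℝ) < (n:ℝ) := by exact_mod_cast hn
  have htot := totient_lower hm
  rw [div_le_div_iff₀ hφ hnr]
  have hNr : (N:ℝ) ≤ 7 * ((m:ℝ)/n) := by
    calc (N:ℝ) ≤ (len:ℝ) + 2 * k := by exact_mod_cast hcount
      _ ≤ 7 * ((m:ℝ)/n) := hreal
  calc (N:ℝ) * n ≤ (7 * ((m:ℝ)/n)) * n := by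
        apply mul_le_mul_of_nonneg_right hNr hnr.le
    _ = 7 * (m:ℝ) := by field_simp
    _ ≤ 7 * (totC * Real.log (Real.log m) * (Nat.totient m)) := by
        apply mul_le_mul_of_nonneg_left htot (by norm_num)
    _ ≤ 8 * totC * Real.log (Real.log m) * (Nat.totient m) := by
        have hll : (0:ℝ) < Real.log (Real.log m) := by
          have he : Real.exp 1 < 3 := by have := Real.exp_one_lt_d9; linarith
          have h3 : (1:ℝ) < Real.log 3 := by
            rw [← Real.log_exp 1]
            exact Real.log_lt_log (Real.exp_pos 1) he
          have : Real.log 3 ≤ Real.log m := Real.log_le_log (by norm_num) (by exact_mod_cast hm)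
          exact Real.log_pos (by linarith)
        nlinarith [totC_pos, hφ, hll]
    _ = 8 * totC * Real.log (Real.log m) * (Nat.totient m) := rfl
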